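/- With notation as above, for m ≥ 3 and any i with 2 ≤ i ≤ m: (γ_{\hat{n₁,nᵢ}} + 2 α_{\hat{n₁,nᵢ}}) · β_{n₁,...,n_m} + 2 n₁ · α_{\hat{n₁,nᵢ}}² = (2 β_{\hat{nᵢ}} - γ_{\hat{nᵢ}}) · β_{\hat{n₁}}. -/

import Mathlib

open Finset

theorem stmt10 (m : ℕ) (hm : 3 ≤ m) (n : Fin m → ℤ) (i : Fin m)
    (hi : i ≠ ⟨0, by omega⟩)
    (α γ β : Finset (Fin m) → ℤ)
    (hα : ∀ S, α S = ∏ j ∈ S, (n j - 2))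
    (hγ : ∀ S, γ S = ∑ j ∈ S, n j * ∏ k ∈ S.erase j, (n k - 2))
    (hβ : ∀ S, β S = γ S + α S) :
    (γ ((Finset.univ.erase ⟨0, by omega⟩).erase i)
        + 2 * α ((Finset.univ.erase ⟨0, by omega⟩).erase i)) * β Finset.univ
      + 2 * n ⟨0, by omega⟩ * (α ((Finset.univ.erase ⟨0, by omega⟩).erase i)) ^ 2
    = (2 * β (Finset.univ.erase i) - γ (Finset.univ.erase i))
        * β (Finset.univ.erase ⟨0, by omega⟩) := by
  set i0 : Fin m := ⟨0, by omega⟩ with hi0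
  have halp : ∀ (S : Finset (Fin m)) z, z ∈ S → α S = (n z - 2) * α (S.erase z) := by
    intro S z hz
    rw [hα, hα, ← Finset.mul_prod_erase S _ hz]
  have hgam : ∀ (S : Finset (Fin m)) z, z ∈ S →
      γ S = n z * α (S.erase z) + (n z - 2) * γ (S.erase z) := by
    intro S z hz
    rw [hγ, hγ, hα, ← Finset.add_sum_erase S _ hz]
    congr 1
    rw [Finset.mul_sum]
    apply Finset.sum_congr rfl
    intro j hj
    have hjz : j ≠ z := (Finset.mem_erase.mp hj).1
    have hzj : z ∈ S.erase j :=
      Finset.mem_erase.mpr ⟨hjz.symm, hz⟩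
    rw [← Finset.mul_prod_erase _ _ hzj, Finset.erase_right_comm]
    ring
  have hi0u : i0 ∈ (univ : Finset (Fin m)) := mem_univ _
  have hiS0 : i ∈ univ.erase i0 := mem_erase.mpr ⟨hi, mem_univ _⟩
  have hi0Si : i0 ∈ univ.erase i := mem_erase.mpr ⟨Ne.symm hi, mem_univ _⟩
  have hec : (univ.erase i).erase i0 = (univ.erase i0).erase i := Finset.erase_right_comm
  have A1 := halp univ i0 hi0u
  have A2 := halp (univ.erase i0) i hiS0
  have A3 := halp (univ.erase i) i0 hi0Si
  have G1 := hgam univ i0 hi0u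
  have G2 := hgam (univ.erase i0) i hiS0
  have G3 := hgam (univ.erase i) i0 hi0Si
  rw [hec] at A3 G3
  rw [hβ, hβ, hβ, G1, G3, A1, A3, A2, G2]
  ring
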